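/- Let p be a prime and d a positive integer. Any multiset of d(p−1)+1 elements of F_p^d has a nonempty submultiset summing to zero (i.e., no multiset of d(p−1)+1 elements of F_p^d is zero-sum-free). -/
import Mathlib

open MvPolynomial in
theorem davenport_constant {p d : ℕ} (hp : p.Prime) (hd : 0 < d)
    (A : Multiset (Fin d → ZMod p)) (hA : Multiset.card A = d * (p - 1) + 1) :
    ∃ B ≤ A, B ≠ 0 ∧ B.sum = 0 := by
  haveI : Fact p.Prime := ⟨hp⟩
  classical
  set l := A.toList with hl
  have hln : l.length = d * (p - 1) + 1 := by rw [hl, A.length_toList, hA]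
  set a : Fin l.length → Fin d → ZMod p := l.get with ha
  set f : Fin d → MvPolynomial (Fin l.length) (ZMod p) :=
    fun j => ∑ i, MvPolynomial.C (a i j) * MvPolynomial.X i ^ (p - 1) with hf
  have hp1 : 0 < p - 1 := by have := hp.two_le; omega
  have hdeg : (∑ j, (f j).totalDegree) < Fintype.card (Fin l.length) := by
    have hle : ∀ j, (f j).totalDegree ≤ p - 1 := by
      intro j
      refine (totalDegree_finset_sum _ _).trans ?_
      apply Finset.sup_le
      intro i _
      calc (MvPolynomial.C (a i j) * MvPolynomial.X i ^ (p - 1)).totalDegree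
          ≤ (MvPolynomial.C (a i j)).totalDegree
              + (MvPolynomial.X i ^ (p-1) : MvPolynomial (Fin l.length) (ZMod p)).totalDegree :=
            totalDegree_mul _ _
        _ ≤ 0 + (p - 1) := by
            gcongr
            · exact le_of_eq (totalDegree_C _)
            · exact (totalDegree_pow _ _).trans (by simp [totalDegree_X])
        _ = p - 1 := by omega
    calc ∑ j, (f j).totalDegree ≤ ∑ _j : Fin d, (p - 1) :=
          Finset.sum_le_sum fun j _ => hle j
      _ = d * (p - 1) := by simp [Finset.sum_const, mul_comm]
      _ < Fintype.card (Fin l.length) := by simp [hln]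
  have hdvd := char_dvd_card_solutions_of_fintype_sum_lt p hdeg
  have h0mem : ∀ i, eval (0 : Fin l.length → ZMod p) (f i) = 0 := by
    intro i
    simp [hf, zero_pow hp1.ne']
  have hcardpos : 0 < Fintype.card { x : Fin l.length → ZMod p // ∀ i, eval x (f i) = 0 } :=
    Fintype.card_pos_iff.mpr ⟨⟨0, h0mem⟩⟩
  have hdvd' : p ∣ Fintype.card { x : Fin l.length → ZMod p // ∀ i, eval x (f i) = 0 } := by
    convert hdvd using 2 <;> exact Subsingleton.elim _ _
  have hcard : 1 < Fintype.card { x : Fin l.length → ZMod p // ∀ i, eval x (f i) = 0 } := by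
    have hple := Nat.le_of_dvd hcardpos hdvd'
    have := hp.two_le
    omega
  obtain ⟨y, hy⟩ := Fintype.exists_ne_of_one_lt_card hcard ⟨0, h0mem⟩
  obtain ⟨x, hx⟩ := y
  have hxne : x ≠ 0 := fun h => hy (by simp [h])
  set s : Finset (Fin l.length) := Finset.univ.filter (fun i => x i ≠ 0) with hs
  set B : Multiset (Fin d → ZMod p) := s.val.map a with hB
  have hAeq : (Finset.univ : Finset (Fin l.length)).val.map a = A := by
    have h1 : ((Finset.univ : Finset (Fin l.length)).val.map a)
        = ((List.finRange l.length).map l.get : Multiset _) := by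
      rw [Fin.univ_def]; rfl
    rw [h1, List.map_get_finRange]
    exact A.coe_toList
  have hpow1 : ∀ i : Fin l.length, x i ≠ 0 → x i ^ (p - 1) = 1 := by
    intro i hi
    have := ZMod.pow_card_sub_one_eq_one hi
    simpa using this
  refine ⟨B, ?_, ?_, ?_⟩
  · rw [← hAeq, hB]
    exact Multiset.map_le_map (Finset.val_le_iff.mpr (Finset.filter_subset _ _))
  · obtain ⟨i, hi⟩ := Function.ne_iff.mp hxne
    have hmem : a i ∈ B := Multiset.mem_map_of_mem a (by simpa [hs] using hi)
    exact fun h => by simp [h] at hmem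
  · have hsum : B.sum = ∑ i ∈ s, a i := rfl
    funext j
    have h1 : (∑ i ∈ s, a i) j = ∑ i ∈ s, a i j := Finset.sum_apply _ _ _
    have h2 : ∑ i ∈ s, a i j = ∑ i, a i j * x i ^ (p - 1) := by
      rw [Finset.sum_congr rfl (fun i hi => ?_)]
      · exact Finset.sum_subset (Finset.subset_univ s) (fun i _ hns => by
          have hxi : x i = 0 := by
            by_contra hxi
            exact hns (by simp [hs, hxi])
          rw [hxi, zero_pow hp1.ne', mul_zero])
      · have hxi : x i ≠ 0 := by
          simpa [hs] using hi
        rw [hpow1 i hxi, mul_one]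
    have h3 : eval x (f j) = ∑ i, a i j * x i ^ (p - 1) := by
      simp [hf]
    have h4 := hx j
    rw [hsum, h1, h2, ← h3, h4]
    rfl
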